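/- With A and its indicator function G as in the context: for every function h : ℝ → ℝ such that h = G volume-almost everywhere, the set {x ∈ [0,1] : h is not continuous at x} has positive Lebesgue measure. -/

import Mathlib

open MeasureTheory Filter Topology

theorem stmt15 (q : ℕ → ℝ)
    (hq : Set.BijOn q {n : ℕ | 1 ≤ n} (Set.Icc (0:ℝ) 1 ∩ Set.range ((↑) : ℚ → ℝ)))
    (ℓ : ℝ) (hℓ : ℓ ∈ Set.Ioo (0:ℝ) 1)
    (I : ℕ → Set ℝ)
    (hI : ∀ j, I j = Set.Icc (0:ℝ) 1 ∩ Set.Ioo (q j - ℓ / 2 ^ (j + 1)) (q j + ℓ / 2 ^ (j + 1)))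
    (A : Set ℝ) (hA : A = ⋃ j ∈ {j : ℕ | 1 ≤ j}, I j)
    (G : ℝ → ℝ) (hG : G = Set.indicator A (fun _ => (1:ℝ))) :
    ∀ h : ℝ → ℝ, h =ᵐ[volume] G →
      0 < volume {x | x ∈ Set.Icc (0:ℝ) 1 ∧ ¬ ContinuousAt h x} := by
  intro h hh
  obtain ⟨hℓ0, hℓ1⟩ := hℓ
  have hN : volume {x | ¬ h x = G x} = 0 := ae_iff.mp hh
  -- volume of each I j
  have hIvol : ∀ j, volume (I j) ≤ ENNReal.ofReal (ℓ / 2 ^ j) := by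
    intro j
    calc volume (I j)
        ≤ volume (Set.Ioo (q j - ℓ / 2 ^ (j + 1)) (q j + ℓ / 2 ^ (j + 1))) := by
          rw [hI]; exact measure_mono Set.inter_subset_right
      _ = ENNReal.ofReal (ℓ / 2 ^ j) := by
          rw [Real.volume_Ioo]; congr 1; ring
  have hAsub : A ⊆ ⋃ k, I (k + 1) := by
    rw [hA]
    intro x hx
    simp only [Set.mem_iUnion, Set.mem_setOf_eq, exists_prop] at hx ⊢
    obtain ⟨j, hj, hxj⟩ := hx
    exact ⟨j - 1, by rwa [Nat.sub_add_cancel hj]⟩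
  have hsummable : Summable fun k : ℕ => ℓ / 2 ^ (k + 1) := by
    have : (fun k : ℕ => ℓ / 2 ^ (k + 1)) = fun k : ℕ => (ℓ / 2) * (1 / 2) ^ k := by
      funext k; rw [pow_succ]; ring_nf; rw [one_div]
    rw [this]
    exact (summable_geometric_two).mul_left _
  have htsum : (∑' k : ℕ, ℓ / 2 ^ (k + 1)) = ℓ := by
    have e : (fun k : ℕ => ℓ / 2 ^ (k + 1)) = fun k : ℕ => (ℓ / 2) * (1 / 2) ^ k := by
      funext k; rw [pow_succ]; ring_nf; rw [one_div]
    rw [e, tsum_mul_left, tsum_geometric_two]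
    ring
  have hAvol : volume A ≤ ENNReal.ofReal ℓ := by
    calc volume A ≤ volume (⋃ k, I (k + 1)) := measure_mono hAsub
      _ ≤ ∑' k, volume (I (k + 1)) := measure_iUnion_le _
      _ ≤ ∑' k, ENNReal.ofReal (ℓ / 2 ^ (k + 1)) := ENNReal.tsum_le_tsum fun k => hIvol (k + 1)
      _ = ENNReal.ofReal (∑' k : ℕ, ℓ / 2 ^ (k + 1)) :=
          (ENNReal.ofReal_tsum_of_nonneg (fun k => by positivity) hsummable).symm
      _ = ENNReal.ofReal ℓ := by rw [htsum]
  -- the complement of A in (0,1) has positive measure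
  have h1 : volume (Set.Ioo (0:ℝ) 1 \ A) ≠ 0 := by
    intro h0
    have hle : volume (Set.Ioo (0:ℝ) 1) ≤ volume A := by
      calc volume (Set.Ioo (0:ℝ) 1)
          ≤ volume ((Set.Ioo (0:ℝ) 1 \ A) ∪ A) := by
            refine measure_mono fun x hx => ?_
            by_cases hxA : x ∈ A
            · exact Or.inr hxA
            · exact Or.inl ⟨hx, hxA⟩
        _ ≤ volume (Set.Ioo (0:ℝ) 1 \ A) + volume A := measure_union_le _ _
        _ = volume A := by rw [h0, zero_add]
    have h11 : (1 : ENNReal) ≤ ENNReal.ofReal ℓ := by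
      have : volume (Set.Ioo (0:ℝ) 1) = 1 := by
        rw [Real.volume_Ioo]; norm_num
      rw [this] at hle
      exact hle.trans hAvol
    have h12 : ENNReal.ofReal ℓ < 1 := ENNReal.ofReal_lt_one.mpr hℓ1
    exact absurd (lt_of_le_of_lt h11 h12) (lt_irrefl _)
  -- the bad set contains (Ioo 0 1 \ A) \ N
  have hsub : (Set.Ioo (0:ℝ) 1 \ A) \ {x | ¬ h x = G x} ⊆
      {x | x ∈ Set.Icc (0:ℝ) 1 ∧ ¬ ContinuousAt h x} := by
    rintro x ⟨⟨hx01, hxA⟩, hxN⟩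
    have hhx : h x = G x := not_not.mp hxN
    have hGx : G x = 0 := by rw [hG]; exact Set.indicator_of_notMem hxA _
    refine ⟨⟨hx01.1.le, hx01.2.le⟩, fun hc => ?_⟩
    obtain ⟨ε, hε, hball⟩ := Metric.continuousAt_iff.mp hc (1/2) (by norm_num)
    set a := max (x - ε) 0 with ha_def
    set b := min (x + ε) 1 with hb_def
    have hax : a < x := max_lt (by linarith) hx01.1
    have hxb : x < b := lt_min (by linarith) hx01.2
    obtain ⟨r, har, hrb⟩ := exists_rat_btwn (hax.trans hxb)
    have ha0 : (0:ℝ) ≤ a := le_max_right _ _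
    have hb1 : b ≤ 1 := min_le_right _ _
    have hr01 : (r:ℝ) ∈ Set.Icc (0:ℝ) 1 ∩ Set.range ((↑) : ℚ → ℝ) :=
      ⟨⟨ha0.trans har.le, hrb.le.trans hb1⟩, ⟨r, rfl⟩⟩
    obtain ⟨j, hj, hqj⟩ := hq.surjOn hr01
    have hδ : 0 < ℓ / 2 ^ (j + 1) := by positivity
    set c := max (q j - ℓ / 2 ^ (j + 1)) a with hc_def
    set d := min (q j + ℓ / 2 ^ (j + 1)) b with hd_def
    have hcq : c < q j := max_lt (by linarith) (by rw [hqj]; exact har)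
    have hqd : q j < d := lt_min (by linarith) (by rw [hqj]; exact hrb)
    set J := Set.Ioo c d with hJ_def
    have hJA : J ⊆ A := by
      intro y hy
      rw [hA]
      simp only [Set.mem_iUnion, Set.mem_setOf_eq, exists_prop]
      refine ⟨j, hj, ?_⟩
      rw [hI]
      refine ⟨⟨?_, ?_⟩, ?_, ?_⟩
      · have : a ≤ c := le_max_right _ _
        linarith [hy.1]
      · have : d ≤ b := min_le_right _ _
        linarith [hy.2]
      · have : q j - ℓ / 2 ^ (j + 1) ≤ c := le_max_left _ _
        linarith [hy.1]
      · have : d ≤ q j + ℓ / 2 ^ (j + 1) := min_le_left _ _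
        linarith [hy.2]
    have hJball : ∀ y ∈ J, dist y x < ε := by
      intro y hy
      have h1 : x - ε ≤ a := le_max_left _ _
      have h2 : b ≤ x + ε := min_le_left _ _
      have h3 : a ≤ c := le_max_right _ _
      have h4 : d ≤ b := min_le_right _ _
      rw [Real.dist_eq, abs_lt]
      constructor <;> [linarith [hy.1]; linarith [hy.2]]
    have hJvol : volume (J \ {x | ¬ h x = G x}) ≠ 0 := by
      rw [measure_diff_null hN, hJ_def, Real.volume_Ioo]
      exact (ENNReal.ofReal_pos.mpr (by linarith)).ne'
    obtain ⟨y, hyJ, hyN⟩ := nonempty_of_measure_ne_zero hJvol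
    have hhy : h y = G y := not_not.mp hyN
    have hGy : G y = 1 := by rw [hG]; exact Set.indicator_of_mem (hJA hyJ) _
    have := hball (hJball y hyJ)
    rw [hhy, hGy, hhx, hGx, Real.dist_eq] at this
    norm_num at this
  have hpos : volume ((Set.Ioo (0:ℝ) 1 \ A) \ {x | ¬ h x = G x}) ≠ 0 := by
    rw [measure_diff_null hN]; exact h1
  calc (0:ENNReal) < volume ((Set.Ioo (0:ℝ) 1 \ A) \ {x | ¬ h x = G x}) :=
        pos_iff_ne_zero.mpr hpos
    _ ≤ volume {x | x ∈ Set.Icc (0:ℝ) 1 ∧ ¬ ContinuousAt h x} := measure_mono hsub
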